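/- Consider binary prediction on a sequence of N = 2^k − 1 points presented in dyadic order, where the learner at each round outputs a probability p̂_t of predicting 1 and the adversary then reveals a label consistent with some threshold over the sorted sequence (i.e., the labels in sorted order form a pattern 1…10…0). The adversary can force expected mistakes at least k/2 = (1/2)·log₂(N+1) while keeping the version space of consistent thresholds nonempty. -/

import Mathlib

open Finset
open scoped Classical

/-- The sorted position (in `{1, …, 2^k − 1}`) of the `t`-th point (0-indexed) presented
in dyadic (binary-search) order. -/
def dyd (k t : ℕ) : ℕ :=
  (2 * (t + 1 - 2 ^ Nat.log2 (t + 1)) + 1) * 2 ^ (k - (Nat.log2 (t + 1) + 1))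

/-- Binary prediction on `N = 2^k − 1` points presented in dyadic order: the learner `L`
outputs a probability `p̂_t ∈ [0,1]` of predicting 1 given the history of labels; the
adversary can reveal labels consistent with some threshold over the sorted sequence
(pattern `1…10…0`) while forcing expected mistakes at least `k/2`. -/
noncomputable def adv (L : List Bool → ℝ) : ℕ → ℕ
  | 0 => 1
  | j+1 =>
    2 * adv L j + (if L ((List.range (adv L j - 1)).map (fun t =>
        if Nat.log2 (t+1) + 1 ≤ j then
          decide (2*(t+1) < adv L j / 2 ^ (j - (Nat.log2 (t+1) + 1)))
        else true)) ≤ 1/2 then 1 else 0)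

noncomputable def histA (L : List Bool → ℝ) (j : ℕ) : List Bool :=
  (List.range (adv L j - 1)).map (fun t =>
        if Nat.log2 (t+1) + 1 ≤ j then
          decide (2*(t+1) < adv L j / 2 ^ (j - (Nat.log2 (t+1) + 1)))
        else true)

lemma adv_succ_eq (L : List Bool → ℝ) (j : ℕ) :
    adv L (j+1) = 2 * adv L j + (if L (histA L j) ≤ 1/2 then 1 else 0) := rfl

lemma adv_succ_bounds (L : List Bool → ℝ) (j : ℕ) :
    2 * adv L j ≤ adv L (j+1) ∧ adv L (j+1) ≤ 2 * adv L j + 1 := by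
  rw [adv_succ_eq]; split <;> omega

lemma adv_lb (L : List Bool → ℝ) (j : ℕ) : 2 ^ j ≤ adv L j := by
  induction j with
  | zero => simp [adv]
  | succ j ih => have := adv_succ_bounds L j; rw [pow_succ]; omega

lemma adv_ub (L : List Bool → ℝ) (j : ℕ) : adv L j < 2 ^ (j+1) := by
  induction j with
  | zero => simp [adv]
  | succ j ih => have := adv_succ_bounds L j; rw [pow_succ]; omega

lemma adv_range (L : List Bool → ℝ) {i j : ℕ} (h : i ≤ j) :
    adv L i * 2 ^ (j - i) ≤ adv L j ∧ adv L j < (adv L i + 1) * 2 ^ (j - i) := by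
  induction j with
  | zero => interval_cases i; simp
  | succ j ih =>
    rcases Nat.eq_or_lt_of_le h with rfl | h'
    · simp
    · have hij : i ≤ j := by omega
      have hs := adv_succ_bounds L j
      have heq : j + 1 - i = (j - i) + 1 := by omega
      rw [heq, pow_succ]
      obtain ⟨h1, h2⟩ := ih hij
      constructor
      · nlinarith [hs.1]
      · nlinarith [hs.2]

lemma adv_div (L : List Bool → ℝ) {i j : ℕ} (h : i ≤ j) :
    adv L j / 2 ^ (j - i) = adv L i :=
  Nat.div_eq_of_lt_le (adv_range L h).1 (adv_range L h).2

lemma key (L : List Bool → ℝ) {k t : ℕ} (hl : Nat.log2 (t+1) + 1 ≤ k) :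
    (dyd k t ≤ adv L k - 2 ^ k) ↔ 2*(t+1) < adv L (Nat.log2 (t+1) + 1) := by
  set l := Nat.log2 (t+1) with hldef
  have h1 : 2 ^ l ≤ t + 1 := Nat.log2_self_le (by omega)
  have hP : 2 ^ (l+1) * 2 ^ (k-(l+1)) = 2 ^ k := by
    rw [← pow_add]; congr 1; omega
  have hPpos : 0 < 2 ^ (k-(l+1)) := Nat.pow_pos (by norm_num)
  have hmk : 2 ^ k ≤ adv L k := adv_lb L k
  have hrange := adv_range L hl
  have hke : k - (l+1) = k - (l + 1) := rfl
  have hdyd : dyd k t = (2*(t+1)+1) * 2 ^ (k-(l+1)) - 2 ^ k := by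
    show (2 * (t + 1 - 2 ^ l) + 1) * 2 ^ (k - (l + 1)) = _
    have h2l : 2 ^ (l+1) = 2 * 2 ^ l := by rw [pow_succ]; ring
    have : 2 * (t + 1 - 2 ^ l) + 1 = (2*(t+1)+1) - 2 ^ (l+1) := by omega
    rw [this, Nat.sub_mul, hP]
  have hbig : 2 ^ k < (2*(t+1)+1) * 2 ^ (k-(l+1)) := by
    calc 2 ^ k = 2 ^ (l+1) * 2 ^ (k-(l+1)) := hP.symm
    _ < (2*(t+1)+1) * 2 ^ (k-(l+1)) := by
        exact (Nat.mul_lt_mul_right hPpos).mpr (by rw [pow_succ]; omega)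
  rw [hdyd]
  have e1 : (2*(t+1)+1) * 2 ^ (k-(l+1)) - 2 ^ k ≤ adv L k - 2 ^ k ↔
      (2*(t+1)+1) * 2 ^ (k-(l+1)) ≤ adv L k := by omega
  rw [e1]
  constructor
  · intro h
    by_contra hc
    push_neg at hc
    have : (adv L (l+1) + 1) * 2 ^ (k-(l+1)) ≤ (2*(t+1)+1) * 2 ^ (k-(l+1)) :=
      mul_le_mul_left (by omega) _
    omega
  · intro h
    calc (2*(t+1)+1) * 2 ^ (k-(l+1)) ≤ adv L (l+1) * 2 ^ (k-(l+1)) :=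
          mul_le_mul_left (by omega) _
    _ ≤ adv L k := hrange.1


lemma hist_eq (L : List Bool → ℝ) {k j : ℕ} (hj : j + 1 ≤ k) :
    (List.range (adv L j - 1)).map (fun t => decide (dyd k t ≤ adv L k - 2 ^ k))
      = histA L j := by
  apply List.map_congr_left
  intro t ht
  rw [List.mem_range] at ht
  have hub := adv_ub L j
  have hlb := adv_lb L j
  have hlt : Nat.log2 (t+1) < j + 1 := by
    rw [Nat.log2_lt (by omega)]; omega
  by_cases h : Nat.log2 (t+1) + 1 ≤ j
  · rw [if_pos h, adv_div L h, decide_eq_decide]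
    exact key L (by omega)
  · have hlj : Nat.log2 (t+1) = j := by omega
    rw [if_neg h, decide_eq_true_eq]
    apply (key L (by omega)).mpr
    rw [hlj]
    have := (adv_succ_bounds L j).1
    omega

theorem stmt17 (k N : ℕ) (hk : 1 ≤ k) (hN : N = 2 ^ k - 1)
    (L : List Bool → ℝ) (hL : ∀ hist : List Bool, L hist ∈ Set.Icc (0 : ℝ) 1) :
    ∃ y : ℕ → Bool,
      (∃ r : ℕ, ∀ t : ℕ, t < N → y t = decide (dyd k t ≤ r)) ∧
      (k : ℝ) / 2 ≤ ∑ t ∈ range N,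
        (if y t then 1 - L ((List.range t).map y) else L ((List.range t).map y)) := by
  classical
  set r := adv L k - 2 ^ k with hr
  refine ⟨fun t => decide (dyd k t ≤ r), ⟨r, fun t _ => rfl⟩, ?_⟩
  set y : ℕ → Bool := fun t => decide (dyd k t ≤ r) with hy
  set f : ℕ → ℝ := fun t =>
    if y t then 1 - L ((List.range t).map y) else L ((List.range t).map y) with hf
  have h2k : 2 ≤ 2 ^ k := by
    calc (2:ℕ) = 2 ^ 1 := rfl
    _ ≤ 2 ^ k := Nat.pow_le_pow_right (by norm_num) hk
  set g : ℕ → ℕ := fun j => adv L j - 1 with hg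
  have hgsm : StrictMono g := by
    apply strictMono_nat_of_lt_succ
    intro j
    have h1 := adv_lb L j
    have h2 := (adv_succ_bounds L j).1
    have h3 : (1:ℕ) ≤ 2 ^ j := Nat.one_le_two_pow
    simp only [hg]
    omega
  -- per-path-point bound
  have hpt : ∀ j, j < k → (1:ℝ)/2 ≤ f (g j) := by
    intro j hjk
    have hlbj := adv_lb L j
    have h1j : (1:ℕ) ≤ adv L j := le_trans Nat.one_le_two_pow hlbj
    have hgj : g j + 1 = adv L j := by simp only [hg]; omega
    have hlog : Nat.log2 (g j + 1) = j := by
      rw [hgj]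
      have hle : j ≤ Nat.log2 (adv L j) := (Nat.le_log2 (by omega)).mpr hlbj
      have hlt : Nat.log2 (adv L j) < j + 1 := (Nat.log2_lt (by omega)).mpr (adv_ub L j)
      omega
    have hhist : (List.range (g j)).map y = histA L j := by
      have : g j = adv L j - 1 := rfl
      rw [this, hy]
      exact hist_eq L hjk
    have hyval : (dyd k (g j) ≤ r) ↔ 2 * adv L j < adv L (j+1) := by
      rw [hr]
      have := key L (k := k) (t := g j) (by rw [hlog]; omega)
      rw [hlog, hgj] at this
      exact this
    simp only [hf, hy]
    rw [hhist]
    by_cases hc : L (histA L j) ≤ 1/2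
    · have hadv : adv L (j+1) = 2 * adv L j + 1 := by rw [adv_succ_eq, if_pos hc]
      have : decide (dyd k (g j) ≤ r) = true := by
        rw [decide_eq_true_eq]; exact hyval.mpr (by omega)
      rw [this, if_pos rfl]
      linarith
    · have hadv : adv L (j+1) = 2 * adv L j := by rw [adv_succ_eq, if_neg hc]; omega
      have : decide (dyd k (g j) ≤ r) = false := by
        rw [decide_eq_false_iff_not]
        intro h
        have := hyval.mp h
        omega
      rw [this]
      simp only [Bool.false_eq_true, if_false]
      linarith
  have hsub : Finset.image g (Finset.range k) ⊆ Finset.range N := by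
    intro x hx
    rw [Finset.mem_image] at hx
    obtain ⟨j, hj, rfl⟩ := hx
    rw [Finset.mem_range] at hj ⊢
    have h1 := adv_ub L j
    have h2 : 2 ^ (j+1) ≤ 2 ^ k := Nat.pow_le_pow_right (by norm_num) (by omega)
    have h3 : (1:ℕ) ≤ adv L j := le_trans Nat.one_le_two_pow (adv_lb L j)
    simp only [hg]
    omega
  have hnn : ∀ t ∈ Finset.range N, t ∉ Finset.image g (Finset.range k) → 0 ≤ f t := by
    intro t _ _
    simp only [hf]
    have := hL ((List.range t).map y)
    rw [Set.mem_Icc] at this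
    split <;> linarith [this.1, this.2]
  calc (k : ℝ) / 2 = ∑ _j ∈ Finset.range k, (1/2 : ℝ) := by
        rw [Finset.sum_const, Finset.card_range, nsmul_eq_mul]; ring
  _ ≤ ∑ j ∈ Finset.range k, f (g j) :=
        Finset.sum_le_sum (fun j hj => hpt j (Finset.mem_range.mp hj))
  _ = ∑ t ∈ Finset.image g (Finset.range k), f t :=
        (Finset.sum_image (fun a _ b _ h => hgsm.injective h)).symm
  _ ≤ ∑ t ∈ Finset.range N, f t :=
        Finset.sum_le_sum_of_subset_of_nonneg hsub hnn
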